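/- Let Γ be a subgroup of the group of isometries of ℝ² that contains a rotation of order at least 3 (i.e. a rotation h with h∘h ≠ id), and let L be a 2-contact system of line segments satisfying (S1) (g·l ∈ L for every l ∈ L, g ∈ Γ). Then for every l ∈ L and every non-identity translation g ∈ Γ one has g(l) ∩ l = ∅. -/

import Mathlib

noncomputable section

/-- The Euclidean plane. -/
abbrev Pt := EuclideanSpace ℝ (Fin 2)

/-- `S` is a (nondegenerate, closed) line segment in the plane. -/
def IsSeg (S : Set Pt) : Prop := ∃ p q : Pt, p ≠ q ∧ S = segment ℝ p q

/-- `x` is an endpoint of the segment `S`. -/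
def IsEndpt (x : Pt) (S : Set Pt) : Prop :=
  ∃ p q : Pt, p ≠ q ∧ S = segment ℝ p q ∧ (x = p ∨ x = q)

/-- `x` is an interior (relative interior) point of the segment `S`. -/
def IsIntPt (x : Pt) (S : Set Pt) : Prop :=
  ∃ p q : Pt, p ≠ q ∧ S = segment ℝ p q ∧ x ∈ openSegment ℝ p q

/-- A contact system: a collection of (pairwise distinct) segments such that no
point of the plane is an interior point of more than one segment. -/
def IsContactSystem (L : Set (Set Pt)) : Prop :=
  (∀ S ∈ L, IsSeg S) ∧
  ∀ x : Pt, ∀ S ∈ L, ∀ T ∈ L, IsIntPt x S → IsIntPt x T → S = T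

/-- A 2-contact system: a contact system such that every point of the plane
belongs to at most two of the segments. -/
def Is2ContactSystem (L : Set (Set Pt)) : Prop :=
  IsContactSystem L ∧
  ∀ x : Pt, ∀ S ∈ L, ∀ T ∈ L, ∀ U ∈ L,
    x ∈ S → x ∈ T → x ∈ U → (S = T ∨ S = U ∨ T = U)

/-- A generic contact system: a contact system such that moreover no point of
the plane is an endpoint of more than one segment. -/
def IsGenericCS (L : Set (Set Pt)) : Prop :=
  IsContactSystem L ∧
  ∀ x : Pt, ∀ S ∈ L, ∀ T ∈ L, IsEndpt x S → IsEndpt x T → S = T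

/-- `x` is a free endpoint of the family `M`: an endpoint of some segment of `M`
that lies in the interior of no segment of `M`. -/
def IsFreeEndpt (x : Pt) (M : Set (Set Pt)) : Prop :=
  (∃ l ∈ M, IsEndpt x l) ∧ ∀ m ∈ M, ¬ IsIntPt x m

/-- The group of isometries of the plane (every isometry of the plane is affine). -/
abbrev Iso2 := Pt ≃ᵃⁱ[ℝ] Pt

/-- The determinant of the linear part of a plane isometry. -/
def detOf (g : Iso2) : ℝ :=
  LinearMap.det g.linearIsometryEquiv.toLinearEquiv.toLinearMap

/-- A rotation: a non-identity orientation-preserving isometry with a fixed point. -/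
def IsRotation (g : Iso2) : Prop := g ≠ 1 ∧ detOf g = 1 ∧ ∃ x : Pt, g x = x

/-- A reflection: an orientation-reversing isometry with a fixed point. -/
def IsReflection (g : Iso2) : Prop := detOf g ≠ 1 ∧ ∃ x : Pt, g x = x

/-- A translation: the map `x ↦ x + v` for some `v ≠ 0`. -/
def IsTranslation (g : Iso2) : Prop := ∃ v : Pt, v ≠ 0 ∧ ∀ x : Pt, g x = x + v

/-- (S1): the collection `L` of segments is invariant under `Γ`. -/
def SatS1 (Γ : Subgroup Iso2) (L : Set (Set Pt)) : Prop :=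
  ∀ l ∈ L, ∀ g ∈ Γ, (⇑g) '' l ∈ L

/-- (S2): `L` has finitely many `Γ`-orbits. -/
def SatS2 (Γ : Subgroup Iso2) (L : Set (Set Pt)) : Prop :=
  ∃ T : Set (Set Pt), T.Finite ∧ T ⊆ L ∧
    ∀ l ∈ L, ∃ t ∈ T, ∃ g ∈ Γ, (⇑g) '' t = l

/-- (S4): for every `l ∈ L` and every `x ∈ l` the stabiliser of `x` in `Γ` is trivial. -/
def SatS4 (Γ : Subgroup Iso2) (L : Set (Set Pt)) : Prop :=
  ∀ l ∈ L, ∀ x ∈ l, ∀ g ∈ Γ, g x = x → g = 1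

/-- A subgroup of the isometry group of the plane is discrete iff (equivalently,
for subgroups of `Isom(ℝ²)`, in the natural topology) each of its orbits is a
discrete subset of the plane. -/
def IsDiscreteSubgrp (Γ : Subgroup Iso2) : Prop :=
  ∀ x : Pt, DiscreteTopology {y : Pt | ∃ g ∈ Γ, g x = y}

/-- A generic `Γ`-symmetric contact system: satisfies (S1)-(S4). -/
def IsGenSymmCS (Γ : Subgroup Iso2) (L : Set (Set Pt)) : Prop :=
  IsGenericCS L ∧ SatS1 Γ L ∧ SatS2 Γ L ∧ SatS4 Γ L

end


set_option maxHeartbeats 1600000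

section StmtSixAux

open scoped RealInnerProductSpace

private lemma pt_comps_ne {d : Pt} (hd : d ≠ 0) : d 0 ^ 2 + d 1 ^ 2 ≠ 0 := by
  intro hcon
  apply hd
  have h0 : d 0 = 0 := by nlinarith [sq_nonneg (d 0), sq_nonneg (d 1)]
  have h1 : d 1 = 0 := by nlinarith [sq_nonneg (d 0), sq_nonneg (d 1)]
  ext i
  fin_cases i
  · exact h0
  · exact h1

private lemma mem_seg_param (p d : Pt) {α t : ℝ} (h1 : α ≤ t) (h2 : t ≤ α + 1) :
    p + t • d ∈ segment ℝ (p + α • d) (p + (α + 1) • d) := by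
  rw [segment_eq_image']
  refine ⟨t - α, ⟨by linarith, by linarith⟩, ?_⟩
  show (p + α • d) + (t - α) • ((p + (α + 1) • d) - (p + α • d)) = p + t • d
  module

private lemma mem_open_seg_param (p d : Pt) {α t : ℝ} (h1 : α < t) (h2 : t < α + 1) :
    p + t • d ∈ openSegment ℝ (p + α • d) (p + (α + 1) • d) := by
  rw [openSegment_eq_image']
  refine ⟨t - α, ⟨by linarith, by linarith⟩, ?_⟩
  show (p + α • d) + (t - α) • ((p + (α + 1) • d) - (p + α • d)) = p + t • d
  module

private lemma seg_param_mem {p d x : Pt} {α : ℝ}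
    (hx : x ∈ segment ℝ (p + α • d) (p + (α + 1) • d)) :
    ∃ t, α ≤ t ∧ t ≤ α + 1 ∧ x = p + t • d := by
  rw [segment_eq_image'] at hx
  obtain ⟨θ, ⟨h0, h1⟩, hθ⟩ := hx
  refine ⟨α + θ, by linarith, by linarith, ?_⟩
  rw [← hθ]
  show (p + α • d) + θ • ((p + (α + 1) • d) - (p + α • d)) = p + (α + θ) • d
  module

private lemma endpts_ne {p d : Pt} (hd : d ≠ 0) (α : ℝ) :
    p + α • d ≠ p + (α + 1) • d := by
  intro hh
  apply hd
  have h1 : α • d = (α + 1) • d := add_left_cancel hh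
  rw [add_smul, one_smul] at h1
  have h3 : α • d + 0 = α • d + d := by rw [add_zero, ← h1]
  exact (add_left_cancel h3).symm

private lemma seg_eq_param {p d : Pt} (hd : d ≠ 0) {α β : ℝ}
    (h : segment ℝ (p + α • d) (p + (α + 1) • d) = segment ℝ (p + β • d) (p + (β + 1) • d)) :
    α = β := by
  have hmem : ∀ γ δ : ℝ, segment ℝ (p + γ • d) (p + (γ + 1) • d)
      = segment ℝ (p + δ • d) (p + (δ + 1) • d) → δ ≤ γ := by
    intro γ δ hseg
    have hm : p + γ • d ∈ segment ℝ (p + δ • d) (p + (δ + 1) • d) := by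
      rw [← hseg]
      exact mem_seg_param p d le_rfl (by linarith)
    obtain ⟨t, ht1, ht2, ht3⟩ := seg_param_mem hm
    have h4 : γ • d = t • d := add_left_cancel ht3
    have h5 : (γ - t) • d = 0 := by rw [sub_smul, h4, sub_self]
    rcases smul_eq_zero.mp h5 with h6 | h6
    · have : γ = t := by linarith [sub_eq_zero.mp (by exact_mod_cast h6)]
      linarith
    · exact absurd h6 hd
  exact le_antisymm (hmem β α h.symm) (hmem α β h)

private lemma cover_lemma {c : ℝ} (h0 : 0 < c) (h1 : c ≤ 1) (u : ℝ) :
    ∃ n : ℤ, (n : ℝ) * c ≤ u ∧ u ≤ (n : ℝ) * c + 1 := by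
  refine ⟨⌊u / c⌋, ?_, ?_⟩
  · calc ((⌊u / c⌋ : ℝ)) * c ≤ (u / c) * c :=
        mul_le_mul_of_nonneg_right (Int.floor_le _) h0.le
      _ = u := div_mul_cancel₀ u h0.ne'
  · have h2 : u / c < (⌊u / c⌋ : ℝ) + 1 := Int.lt_floor_add_one _
    have h3 : u < ((⌊u / c⌋ : ℝ) + 1) * c := by
      calc u = (u / c) * c := (div_mul_cancel₀ u h0.ne').symm
        _ < ((⌊u / c⌋ : ℝ) + 1) * c := mul_lt_mul_of_pos_right h2 h0
    nlinarith

private lemma rot_struct (R : Pt ≃ₗᵢ[ℝ] Pt)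
    (hdet : LinearMap.det R.toLinearEquiv.toLinearMap = 1) :
    ∃ a b : ℝ, a ^ 2 + b ^ 2 = 1 ∧
      ∀ w : Pt, (R w) 0 = a * w 0 - b * w 1 ∧ (R w) 1 = b * w 0 + a * w 1 := by
  have hinn : ∀ w w' : Pt, (inner ℝ w w' : ℝ) = w 0 * w' 0 + w 1 * w' 1 := by
    intro w w'
    simp [PiLp.inner_apply, Fin.sum_univ_two]
    ring
  set e0 : Pt := PiLp.basisFun 2 ℝ (Fin 2) 0 with he0
  set e1 : Pt := PiLp.basisFun 2 ℝ (Fin 2) 1 with he1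
  have he00 : e0 0 = 1 := by rw [he0]; simp [PiLp.basisFun_apply]
  have he01 : e0 1 = 0 := by rw [he0]; simp [PiLp.basisFun_apply]
  have he10 : e1 0 = 0 := by rw [he1]; simp [PiLp.basisFun_apply]
  have he11 : e1 1 = 1 := by rw [he1]; simp [PiLp.basisFun_apply]
  set a : ℝ := (R e0) 0 with ha
  set b : ℝ := (R e0) 1 with hb
  set a' : ℝ := (R e1) 0 with ha'
  set b' : ℝ := (R e1) 1 with hb'
  have h1 : a * a + b * b = 1 := by
    have := hinn (R e0) (R e0)
    rw [R.inner_map_map, hinn] at this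
    rw [he00, he01] at this
    rw [ha, hb]; linarith [this]
  have h2 : a' * a' + b' * b' = 1 := by
    have := hinn (R e1) (R e1)
    rw [R.inner_map_map, hinn] at this
    rw [he10, he11] at this
    rw [ha', hb']; linarith [this]
  have h3 : a * a' + b * b' = 0 := by
    have := hinn (R e0) (R e1)
    rw [R.inner_map_map, hinn] at this
    rw [he00, he01, he10, he11] at this
    rw [ha, hb, ha', hb']; linarith [this]
  have h4 : a * b' - a' * b = 1 := by
    have h := LinearMap.det_toMatrix (PiLp.basisFun 2 ℝ (Fin 2)) R.toLinearEquiv.toLinearMap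
    rw [Matrix.det_fin_two, hdet] at h
    simp only [LinearMap.toMatrix_apply, PiLp.basisFun_repr] at h
    rw [ha, hb, ha', hb', he0, he1]
    exact h
  have hsq : (b' - a) ^ 2 + (a' + b) ^ 2 = 0 := by
    linear_combination h1 + h2 - 2 * h4
  have hb'a : b' = a := by
    have h5 : (b' - a) ^ 2 = 0 := by nlinarith [sq_nonneg (a' + b)]
    have := pow_eq_zero_iff (two_ne_zero) |>.mp h5
    linarith [sub_eq_zero.mp (by linarith [this] : b' - a = 0)]
  have ha'b : a' = -b := by
    have h5 : (a' + b) ^ 2 = 0 := by nlinarith [sq_nonneg (b' - a)]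
    have := pow_eq_zero_iff (two_ne_zero) |>.mp h5
    linarith
  refine ⟨a, b, by nlinarith, ?_⟩
  intro w
  have hdec : w = w 0 • e0 + w 1 • e1 := by
    ext i
    fin_cases i
    · show w 0 = (w 0 • e0 + w 1 • e1) 0
      show w 0 = w 0 * e0 0 + w 1 * e1 0
      rw [he00, he10]; ring
    · show w 1 = (w 0 • e0 + w 1 • e1) 1
      show w 1 = w 0 * e0 1 + w 1 * e1 1
      rw [he01, he11]; ring
  have hRw : R w = w 0 • R e0 + w 1 • R e1 := by
    calc R w = R (w 0 • e0 + w 1 • e1) := by rw [← hdec]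
      _ = w 0 • R e0 + w 1 • R e1 := by rw [map_add, map_smul, map_smul]
  constructor
  · have : (R w) 0 = w 0 * (R e0 0) + w 1 * (R e1 0) := by rw [hRw]; rfl
    rw [this, ← ha, ← ha', ha'b]; ring
  · have : (R w) 1 = w 0 * (R e0 1) + w 1 * (R e1 1) := by rw [hRw]; rfl
    rw [this, ← hb, ← hb', hb'a]; ring

end StmtSixAux

/-- If a subgroup `Γ` of the isometry group of the plane
contains a rotation of order at least 3, then in any `Γ`-invariant 2-contact
system no segment meets its image under a (non-identity) translation in `Γ`. -/
theorem stmt_6 (Γ : Subgroup Iso2)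
    (hrot : ∃ h ∈ Γ, IsRotation h ∧ h * h ≠ 1)
    (L : Set (Set Pt)) (hL : Is2ContactSystem L) (hS1 : SatS1 Γ L) :
    ∀ l ∈ L, ∀ g ∈ Γ, IsTranslation g → (⇑g) '' l ∩ l = ∅ := by
  obtain ⟨h, hhΓ, ⟨hh1, hhdet, x₀, hx₀⟩, hh2⟩ := hrot
  intro l hl g hg hgt
  obtain ⟨v, hv0, hgv⟩ := hgt
  by_contra hne
  obtain ⟨x, hxg, hxl⟩ := Set.nonempty_iff_ne_empty.2 hne
  obtain ⟨P0, Q0, hPQ0, hlseg0⟩ := hL.1.1 l hl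
  have hxl' := hxl
  rw [hlseg0, segment_eq_image'] at hxl'
  obtain ⟨s, ⟨hs0, hs1⟩, hxs⟩ := hxl'
  obtain ⟨y, hyl, hyx⟩ := hxg
  have hyl' := hyl
  rw [hlseg0, segment_eq_image'] at hyl'
  obtain ⟨t, ⟨ht0, ht1⟩, hyt⟩ := hyl'
  have hxs' : P0 + s • (Q0 - P0) = x := hxs
  have hyt' : P0 + t • (Q0 - P0) = y := hyt
  have hveq : v = (s - t) • (Q0 - P0) := by
    have h1 : y + v = x := by rw [← hgv y]; exact hyx
    rw [← hxs', ← hyt'] at h1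
    have h2 : v = (P0 + s • (Q0 - P0)) - (P0 + t • (Q0 - P0)) := by rw [← h1]; abel
    rw [h2]; module
  obtain ⟨P, Q, hPQ, hlseg, c, hc0, hc1, hvc⟩ :
      ∃ P Q : Pt, P ≠ Q ∧ l = segment ℝ P Q ∧ ∃ c : ℝ, 0 < c ∧ c ≤ 1 ∧ v = c • (Q - P) := by
    rcases lt_trichotomy (s - t) 0 with hlt | heq | hgt'
    · exact ⟨Q0, P0, hPQ0.symm, by rw [hlseg0, segment_symm], -(s - t), by linarith,
        by linarith, by rw [hveq]; module⟩
    · exact absurd (show v = 0 by rw [hveq, heq, zero_smul]) hv0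
    · exact ⟨P0, Q0, hPQ0, hlseg0, s - t, hgt', by linarith, hveq⟩
  set d : Pt := Q - P with hdd
  have hd : d ≠ 0 := by rw [hdd]; exact sub_ne_zero.mpr hPQ.symm
  have hdsq := pt_comps_ne hd
  have hone : ∀ z : Pt, (1 : Iso2) z = z := fun _ => rfl
  have hginv : ∀ z : Pt, (g⁻¹ : Iso2) z = z - v := by
    intro z
    have h1 : (g⁻¹ * g : Iso2) (z - v) = (1 : Iso2) (z - v) := by rw [inv_mul_cancel]
    have h2 : (g⁻¹ : Iso2) (g (z - v)) = z - v := h1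
    rwa [hgv (z - v), show z - v + v = z by abel] at h2
  have hpow : ∀ n : ℤ, ∀ z : Pt, (g ^ n : Iso2) z = z + (n : ℝ) • v := by
    intro n
    induction n using Int.induction_on with
    | zero =>
      intro z
      have e1 : (g ^ (0 : ℤ) : Iso2) z = z := by rw [zpow_zero]; exact hone z
      rw [e1]; push_cast; module
    | succ k ih =>
      intro z
      have e1 : (g ^ ((k : ℤ) + 1) : Iso2) z = (g ^ (k : ℤ) : Iso2) (g z) := by
        rw [zpow_add_one]; rfl
      rw [e1, hgv z, ih (z + v)]
      push_cast; module
    | pred k ih =>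
      intro z
      have e1 : (g ^ (-(k : ℤ) - 1) : Iso2) z = (g ^ (-(k : ℤ)) : Iso2) ((g⁻¹ : Iso2) z) := by
        rw [zpow_sub_one]; rfl
      rw [e1, hginv z, ih (z - v)]
      push_cast; module
  have hSseg : ∀ n : ℤ, (⇑(g ^ n) : Pt → Pt) '' l
      = segment ℝ (P + ((n : ℝ) * c) • d) (P + ((n : ℝ) * c + 1) • d) := by
    intro n
    have hfun : (⇑(g ^ n) : Pt → Pt) = fun z => ((n : ℝ) • v) + z := by
      funext z; rw [hpow n z]; abel
    rw [hlseg, hfun, segment_translate_image]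
    rw [show (n : ℝ) • v + P = P + ((n : ℝ) * c) • d by rw [hvc]; module,
        show (n : ℝ) • v + Q = P + ((n : ℝ) * c + 1) • d by
          rw [hvc, show Q = P + d by rw [hdd]; abel]; module]
  have hSn : ∀ n : ℤ, segment ℝ (P + ((n : ℝ) * c) • d) (P + ((n : ℝ) * c + 1) • d) ∈ L := by
    intro n
    have h1 := hS1 l hl (g ^ n) (zpow_mem hg n)
    rwa [hSseg n] at h1
  have hdetR : LinearMap.det (h.linearIsometryEquiv).toLinearEquiv.toLinearMap = 1 := hhdet
  obtain ⟨a, b, hab, hR⟩ := rot_struct h.linearIsometryEquiv hdetR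
  have hhy : ∀ z : Pt, h z = h.linearIsometryEquiv (z - x₀) + x₀ := by
    intro z
    have e1 : z - x₀ + x₀ = z := by abel
    have h1 := AffineIsometryEquiv.map_vadd h x₀ (z - x₀)
    rw [vadd_eq_add, vadd_eq_add, e1, hx₀] at h1
    exact h1
  have hb0 : b ≠ 0 := by
    intro hb
    have hRw : ∀ w : Pt, h.linearIsometryEquiv w = a • w := by
      intro w
      ext i
      fin_cases i
      · show h.linearIsometryEquiv w 0 = a * w 0
        rw [(hR w).1, hb]; ring
      · show h.linearIsometryEquiv w 1 = a * w 1
        rw [(hR w).2, hb]; ring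
    have ha2 : (a - 1) * (a + 1) = 0 := by nlinarith
    rcases mul_eq_zero.mp ha2 with ha1 | ha1
    · apply hh1
      apply AffineIsometryEquiv.ext
      intro z
      show h z = z
      rw [hhy z, hRw]
      have haa : a = 1 := by linarith
      rw [haa, one_smul]
      abel
    · apply hh2
      apply AffineIsometryEquiv.ext
      intro z
      show (h * h) z = z
      have e1 : (h * h) z = h (h z) := rfl
      rw [e1, hhy z, hRw, hhy (a • (z - x₀) + x₀), hRw]
      have e2 : a • (a • (z - x₀) + x₀ - x₀) + x₀ = (a * a) • (z - x₀) + x₀ := by module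
      have haa : a = -1 := by linarith
      rw [e2, haa, show ((-1 : ℝ) * -1) = 1 by norm_num, one_smul]
      abel
  set Rd : Pt := h.linearIsometryEquiv d with hRdd
  have hRd0 : Rd 0 = a * d 0 - b * d 1 := (hR d).1
  have hRd1 : Rd 1 = b * d 0 + a * d 1 := (hR d).2
  have hRdne : Rd ≠ 0 := fun hz =>
    hd (h.linearIsometryEquiv.injective (by rw [map_zero]; exact hz))
  have hline : ∀ τ : ℝ, h (P + τ • d) = h P + τ • Rd := by
    intro τ
    rw [hhy (P + τ • d), hhy P, hRdd]
    rw [show P + τ • d - x₀ = (P - x₀) + τ • d by abel, map_add, map_smul]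
    module
  have himage : ∀ A B : Pt, ⇑h '' segment ℝ A B = segment ℝ (h A) (h B) := by
    intro A B
    rw [segment_eq_image' ℝ A B, segment_eq_image' ℝ (h A) (h B), ← Set.image_comp]
    apply Set.image_congr
    intro θ _
    show h (A + θ • (B - A)) = h A + θ • (h B - h A)
    rw [hhy (A + θ • (B - A)), hhy A, hhy B]
    rw [show A + θ • (B - A) - x₀ = (A - x₀) + θ • ((B - x₀) - (A - x₀)) by module]
    simp only [map_add, map_smul, map_sub]
    module
  have hTseg : ∀ m : ℤ, (⇑(h * g ^ m) : Pt → Pt) '' l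
      = segment ℝ (h P + ((m : ℝ) * c) • Rd) (h P + ((m : ℝ) * c + 1) • Rd) := by
    intro m
    have e1 : (⇑(h * g ^ m) : Pt → Pt) '' l = ⇑h '' ((⇑(g ^ m) : Pt → Pt) '' l) := by
      rw [← Set.image_comp]; rfl
    rw [e1, hSseg m, himage, hline, hline]
  have hTm : ∀ m : ℤ, segment ℝ (h P + ((m : ℝ) * c) • Rd) (h P + ((m : ℝ) * c + 1) • Rd) ∈ L := by
    intro m
    have h1 := hS1 l hl (h * g ^ m) (mul_mem hhΓ (zpow_mem hg m))
    rwa [hTseg m] at h1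
  have hSne : ∀ k k' : ℤ, k ≠ k' →
      segment ℝ (P + ((k : ℝ) * c) • d) (P + ((k : ℝ) * c + 1) • d)
        ≠ segment ℝ (P + ((k' : ℝ) * c) • d) (P + ((k' : ℝ) * c + 1) • d) := by
    intro k k' hkk' hEq
    have h1 : (k : ℝ) * c = (k' : ℝ) * c := seg_eq_param hd hEq
    have h2 : (k : ℝ) = (k' : ℝ) := mul_right_cancel₀ hc0.ne' h1
    exact hkk' (by exact_mod_cast h2)
  have hTne : ∀ k k' : ℤ, k ≠ k' →
      segment ℝ (h P + ((k : ℝ) * c) • Rd) (h P + ((k : ℝ) * c + 1) • Rd)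
        ≠ segment ℝ (h P + ((k' : ℝ) * c) • Rd) (h P + ((k' : ℝ) * c + 1) • Rd) := by
    intro k k' hkk' hEq
    have h1 : (k : ℝ) * c = (k' : ℝ) * c := seg_eq_param hRdne hEq
    have h2 : (k : ℝ) = (k' : ℝ) := mul_right_cancel₀ hc0.ne' h1
    exact hkk' (by exact_mod_cast h2)
  have hST : ∀ n m : ℤ,
      segment ℝ (P + ((n : ℝ) * c) • d) (P + ((n : ℝ) * c + 1) • d)
        ≠ segment ℝ (h P + ((m : ℝ) * c) • Rd) (h P + ((m : ℝ) * c + 1) • Rd) := by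
    intro n m hEq
    have h1 : h P + ((m : ℝ) * c) • Rd
        ∈ segment ℝ (P + ((n : ℝ) * c) • d) (P + ((n : ℝ) * c + 1) • d) := by
      rw [hEq]; exact left_mem_segment ℝ _ _
    have h2 : h P + ((m : ℝ) * c + 1) • Rd
        ∈ segment ℝ (P + ((n : ℝ) * c) • d) (P + ((n : ℝ) * c + 1) • d) := by
      rw [hEq]; exact right_mem_segment ℝ _ _
    obtain ⟨t1, _, _, ht1⟩ := seg_param_mem h1
    obtain ⟨t2, _, _, ht2⟩ := seg_param_mem h2
    have h3 : Rd = (t2 - t1) • d := by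
      calc Rd = (h P + ((m : ℝ) * c + 1) • Rd) - (h P + ((m : ℝ) * c) • Rd) := by module
        _ = (P + t2 • d) - (P + t1 • d) := by rw [ht1, ht2]
        _ = (t2 - t1) • d := by module
    have e0 : a * d 0 - b * d 1 = (t2 - t1) * d 0 := by rw [← hRd0, h3]; rfl
    have e1 : b * d 0 + a * d 1 = (t2 - t1) * d 1 := by rw [← hRd1, h3]; rfl
    have hzero : b * (d 0 ^ 2 + d 1 ^ 2) = 0 := by linear_combination d 0 * e1 - d 1 * e0
    exact (mul_ne_zero hb0 hdsq) hzero
  set w0 : ℝ := h P 0 - P 0 with hw0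
  set w1 : ℝ := h P 1 - P 1 with hw1
  have hne' : b * (d 0 ^ 2 + d 1 ^ 2) ≠ 0 := mul_ne_zero hb0 hdsq
  set u : ℝ := (w0 * (b * d 0 + a * d 1) - w1 * (a * d 0 - b * d 1)) / (b * (d 0 ^ 2 + d 1 ^ 2)) with hu
  set u' : ℝ := (d 1 * w0 - d 0 * w1) / (b * (d 0 ^ 2 + d 1 ^ 2)) with hu'
  have hz2 : P + u • d = h P + u' • Rd := by
    ext i
    fin_cases i
    · show P 0 + u * d 0 = h P 0 + u' * Rd 0
      rw [hRd0, hu, hu']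
      have e0 : h P 0 = P 0 + w0 := by rw [hw0]; ring
      rw [e0]
      field_simp
      ring
    · show P 1 + u * d 1 = h P 1 + u' * Rd 1
      rw [hRd1, hu, hu']
      have e0 : h P 1 = P 1 + w1 := by rw [hw1]; ring
      rw [e0]
      field_simp
      ring
  obtain ⟨n, hn1, hn2⟩ := cover_lemma hc0 hc1 u
  obtain ⟨m, hm1, hm2⟩ := cover_lemma hc0 hc1 u'
  have hzT : P + u • d ∈ segment ℝ (h P + ((m : ℝ) * c) • Rd) (h P + ((m : ℝ) * c + 1) • Rd) := by
    rw [hz2]; exact mem_seg_param (h P) Rd hm1 hm2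
  have hzS : P + u • d ∈ segment ℝ (P + ((n : ℝ) * c) • d) (P + ((n : ℝ) * c + 1) • d) :=
    mem_seg_param P d hn1 hn2
  rcases eq_or_lt_of_le hn1 with hun | hun
  · have hb1 : ((n - 1 : ℤ) : ℝ) * c ≤ u := by push_cast; nlinarith
    have hb2 : u ≤ ((n - 1 : ℤ) : ℝ) * c + 1 := by push_cast; nlinarith
    have hzS' := mem_seg_param P d hb1 hb2
    rcases hL.2 (P + u • d) _ (hSn n) _ (hSn (n - 1)) _ (hTm m) hzS hzS' hzT with e | e | e
    · exact hSne n (n - 1) (by omega) e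
    · exact hST n m e
    · exact hST (n - 1) m e
  · rcases eq_or_lt_of_le hn2 with hun2 | hun2
    · have hb1 : ((n + 1 : ℤ) : ℝ) * c ≤ u := by push_cast; nlinarith
      have hb2 : u ≤ ((n + 1 : ℤ) : ℝ) * c + 1 := by push_cast; nlinarith
      have hzS' := mem_seg_param P d hb1 hb2
      rcases hL.2 (P + u • d) _ (hSn n) _ (hSn (n + 1)) _ (hTm m) hzS hzS' hzT with e | e | e
      · exact hSne n (n + 1) (by omega) e
      · exact hST n m e
      · exact hST (n + 1) m e
    · rcases eq_or_lt_of_le hm1 with hvm | hvm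
      · have hb1 : ((m - 1 : ℤ) : ℝ) * c ≤ u' := by push_cast; nlinarith
        have hb2 : u' ≤ ((m - 1 : ℤ) : ℝ) * c + 1 := by push_cast; nlinarith
        have hzT' : P + u • d ∈ segment ℝ (h P + (((m - 1 : ℤ) : ℝ) * c) • Rd)
            (h P + (((m - 1 : ℤ) : ℝ) * c + 1) • Rd) := by
          rw [hz2]; exact mem_seg_param (h P) Rd hb1 hb2
        rcases hL.2 (P + u • d) _ (hTm m) _ (hTm (m - 1)) _ (hSn n) hzT hzT' hzS with e | e | e
        · exact hTne m (m - 1) (by omega) e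
        · exact hST n m e.symm
        · exact hST n (m - 1) e.symm
      · rcases eq_or_lt_of_le hm2 with hvm2 | hvm2
        · have hb1 : ((m + 1 : ℤ) : ℝ) * c ≤ u' := by push_cast; nlinarith
          have hb2 : u' ≤ ((m + 1 : ℤ) : ℝ) * c + 1 := by push_cast; nlinarith
          have hzT' : P + u • d ∈ segment ℝ (h P + (((m + 1 : ℤ) : ℝ) * c) • Rd)
              (h P + (((m + 1 : ℤ) : ℝ) * c + 1) • Rd) := by
            rw [hz2]; exact mem_seg_param (h P) Rd hb1 hb2
          rcases hL.2 (P + u • d) _ (hTm m) _ (hTm (m + 1)) _ (hSn n) hzT hzT' hzS with e | e | e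
          · exact hTne m (m + 1) (by omega) e
          · exact hST n m e.symm
          · exact hST n (m + 1) e.symm
        · have hint1 : IsIntPt (P + u • d)
              (segment ℝ (P + ((n : ℝ) * c) • d) (P + ((n : ℝ) * c + 1) • d)) :=
            ⟨_, _, endpts_ne hd _, rfl, mem_open_seg_param P d hun hun2⟩
          have hint2 : IsIntPt (P + u • d)
              (segment ℝ (h P + ((m : ℝ) * c) • Rd) (h P + ((m : ℝ) * c + 1) • Rd)) :=
            ⟨_, _, endpts_ne hRdne _, rfl, by
              rw [hz2]; exact mem_open_seg_param (h P) Rd hvm hvm2⟩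
          exact hST n m (hL.1.2 (P + u • d) _ (hSn n) _ (hTm m) hint1 hint2)
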